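/- arXiv:1011.6612 — 2 statements merged into one kernel-verified Lean document; each statement's English description precedes it below -/
import Mathlib

section
/- For all natural numbers n, k with k ≤ n and all natural numbers i with i ≤ 2n+2: C(2n-k+2, 2n-i+2) - C(k, 2n-i+2) = sum over j from k to n of ((i+1)/(j+1)) * C(j+1, i-j) * C(2n-(k+j)+1, 2n-2j+1). -/
/-- Binomial coefficient `C(n,k)` extended by `0` when `k < 0` or `k > n`. -/
def Cz (n k : ℤ) : ℤ := if 0 ≤ k ∧ k ≤ n then (n.toNat.choose k.toNat : ℤ) else 0

lemma cz_of_neg {a b : ℤ} (h : b < 0) : Cz a b = 0 := by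
  unfold Cz; rw [if_neg (by omega)]

lemma cz_of_gt {a b : ℤ} (h : a < b) : Cz a b = 0 := by
  unfold Cz; rw [if_neg (by omega)]

lemma cz_eq {a b : ℤ} (h1 : 0 ≤ b) (h2 : b ≤ a) :
    Cz a b = (a.toNat.choose b.toNat : ℤ) := by
  unfold Cz; rw [if_pos ⟨h1, h2⟩]

lemma cz_pascal (a b : ℤ) (ha : 0 ≤ a) : Cz (a + 1) b = Cz a b + Cz a (b - 1) := by
  rcases lt_or_ge b 0 with hb | hb
  · rw [cz_of_neg hb, cz_of_neg hb, cz_of_neg (by omega)]; ring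
  rcases eq_or_lt_of_le hb with hb0 | hb1
  · rw [← hb0, cz_eq le_rfl (by omega), cz_eq le_rfl ha, cz_of_neg (by omega)]
    simp
  rcases le_or_gt b (a + 1) with hba | hba
  · rw [cz_eq (by omega) hba]
    rw [show (a + 1).toNat = a.toNat + 1 from by omega,
        show b.toNat = (b - 1).toNat + 1 from by omega, Nat.choose_succ_succ']
    rcases le_or_gt b a with hba2 | hba2
    · rw [cz_eq (by omega) hba2, cz_eq (by omega) (by omega)]
      rw [show b.toNat = (b - 1).toNat + 1 from by omega]
      push_cast; ring
    · rw [cz_of_gt hba2, cz_eq (by omega) (by omega)]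
      rw [show (b - 1).toNat + 1 = a.toNat + 1 from by omega, Nat.choose_succ_self,
          show (b - 1).toNat = a.toNat from by omega]
      push_cast; ring
  · rw [cz_of_gt hba, cz_of_gt (by omega), cz_of_gt (by omega)]; ring

lemma cz_symm (a b : ℤ) (ha : 0 ≤ a) : Cz a b = Cz a (a - b) := by
  by_cases h : 0 ≤ b ∧ b ≤ a
  · rw [cz_eq h.1 h.2, cz_eq (by omega) (by omega),
        show (a - b).toNat = a.toNat - b.toNat from by omega,
        Nat.choose_symm (by omega)]
  · unfold Cz; rw [if_neg h, if_neg (by omega)]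

lemma czkey (j : ℕ) (i : ℤ) :
    (i + 1) * Cz ((j : ℤ) + 1) (i - j)
      = ((j : ℤ) + 1) * (Cz ((j : ℤ) + 1) (i - j) + Cz (j : ℤ) (i - j - 1)) := by
  rcases lt_or_ge (i - j) 0 with h | h
  · rw [cz_of_neg h, cz_of_neg (by omega)]; ring
  rcases lt_or_ge ((j : ℤ) + 1) (i - j) with h2 | h2
  · rw [cz_of_gt h2, cz_of_gt (show (j : ℤ) < i - j - 1 from by omega)]; ring
  rcases eq_or_lt_of_le h with h0 | h1
  · rw [← h0, cz_eq le_rfl (by positivity), cz_of_neg (by norm_num)]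
    simp
    omega
  · set M : ℕ := (i - j).toNat with hM
    have hiM : i = (j : ℤ) + M := by omega
    have hM1 : 1 ≤ M := by omega
    have hMj : M ≤ j + 1 := by omega
    rw [cz_eq (by omega) h2, cz_eq (by omega) (by omega)]
    have hkey : (j + 1) * j.choose (M - 1) = (j + 1).choose M * M := by
      have := Nat.add_one_mul_choose_eq j (M - 1)
      rwa [
        show M - 1 + 1 = M from by omega] at this
    have hkeyZ : ((j : ℤ) + 1) * (j.choose (M - 1) : ℤ) = ((j + 1).choose M : ℤ) * M := by
      exact_mod_cast hkey
    rw [show ((j : ℤ) + 1).toNat = j + 1 from by omega,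
        show (i - (j : ℤ)).toNat = M from by omega,
        show ((j : ℤ)).toNat = j from by omega,
        show (i - (j : ℤ) - 1).toNat = M - 1 from by omega]
    linear_combination (((j + 1).choose M : ℤ)) * hiM - hkeyZ

lemma sum_Icc_bot {M : Type*} [AddCommMonoid M] {k n : ℕ} (h : k ≤ n) (f : ℕ → M) :
    ∑ j ∈ Finset.Icc k n, f j = f k + ∑ j ∈ Finset.Icc (k + 1) n, f j := by
  rw [show Finset.Icc k n = insert k (Finset.Icc (k + 1) n) from by
        ext x; simp only [Finset.mem_insert, Finset.mem_Icc]; omega,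
      Finset.sum_insert (by simp only [Finset.mem_Icc]; omega)]

lemma sum_Icc_top {M : Type*} [AddCommMonoid M] {k n : ℕ} (h : k ≤ n + 1) (f : ℕ → M) :
    ∑ j ∈ Finset.Icc k (n + 1), f j = (∑ j ∈ Finset.Icc k n, f j) + f (n + 1) := by
  rw [show Finset.Icc k (n + 1) = insert (n + 1) (Finset.Icc k n) from by
        ext x; simp only [Finset.mem_insert, Finset.mem_Icc]; omega,
      Finset.sum_insert (by simp only [Finset.mem_Icc]; omega)]
  exact add_comm _ _

lemma sum_Icc_shift {M : Type*} [AddCommMonoid M] (k n : ℕ) (f : ℕ → M) :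
    ∑ m ∈ Finset.Icc (k + 1) (n + 1), f m = ∑ m ∈ Finset.Icc k n, f (m + 1) := by
  have h : Finset.Icc (k + 1) (n + 1) = (Finset.Icc k n).map (addRightEmbedding 1) := by
    rw [Finset.map_add_right_Icc]
  rw [h, Finset.sum_map]
  exact Finset.sum_congr rfl fun x _ => rfl

lemma sum_Icc_telescope {k : ℕ} (g : ℕ → ℤ) :
    ∀ n, k ≤ n + 1 → ∑ m ∈ Finset.Icc k n, (g (m + 1) - g m) = g (n + 1) - g k := by
  intro n
  induction n with
  | zero =>
      intro h
      interval_cases k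
      · simp
      · simp
  | succ n ih =>
      intro h
      rcases le_or_gt k (n + 1) with h2 | h2
      · rw [sum_Icc_top h2, ih h2]; ring
      · rw [Finset.Icc_eq_empty (by omega), show n + 1 + 1 = k from by omega]
        simp

/-- Closed forms for the two mutually-recursive families of sums. -/
lemma lemAE : ∀ t : ℕ,
    (∀ n k : ℕ, ∀ i : ℤ, k ≤ n + 1 → 2 * n + 1 - k = t →
      ∑ j ∈ Finset.Icc k n,
          Cz ((j : ℤ) + 1) (i - j) * Cz (2 * (n : ℤ) - k - j + 1) (2 * (n : ℤ) - 2 * j + 1)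
        = ∑ m ∈ Finset.Icc k n, Cz (2 * (m : ℤ) - k + 1) (2 * (n : ℤ) - i + 1))
    ∧ (∀ n k : ℕ, ∀ i : ℤ, k ≤ n → 2 * n - k = t →
      ∑ j ∈ Finset.Icc k n,
          Cz ((j : ℤ) + 1) (i - j) * Cz (2 * (n : ℤ) - k - j) (2 * (n : ℤ) - 2 * j)
        = (∑ m ∈ Finset.Icc k n, Cz (2 * (m : ℤ) - k) (2 * (n : ℤ) - i))
            + Cz (k : ℤ) (2 * (n : ℤ) - i + 1)) := by
  intro t
  induction t using Nat.strong_induction_on with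
  | _ t ih =>
  constructor
  · -- A family
    intro n k i hk ht
    rcases eq_or_lt_of_le hk with hkn1 | hkn
    · rw [Finset.Icc_eq_empty (by omega)]; simp
    have hkn : k ≤ n := by omega
    have step1 : ∀ j ∈ Finset.Icc k n,
        Cz ((j : ℤ) + 1) (i - j) * Cz (2 * (n : ℤ) - k - j + 1) (2 * (n : ℤ) - 2 * j + 1)
          = Cz ((j : ℤ) + 1) (i - j) * Cz (2 * (n : ℤ) - k - j) (2 * (n : ℤ) - 2 * j + 1)
            + Cz ((j : ℤ) + 1) (i - j) * Cz (2 * (n : ℤ) - k - j) (2 * (n : ℤ) - 2 * j) := by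
      intro j hj
      simp only [Finset.mem_Icc] at hj
      rw [cz_pascal (2 * (n : ℤ) - k - j) (2 * (n : ℤ) - 2 * j + 1) (by push_cast; omega)]
      rw [show 2 * (n : ℤ) - 2 * j + 1 - 1 = 2 * (n : ℤ) - 2 * j from by ring]
      ring
    rw [Finset.sum_congr rfl step1, Finset.sum_add_distrib]
    have e1 : ∑ j ∈ Finset.Icc k n,
        Cz ((j : ℤ) + 1) (i - j) * Cz (2 * (n : ℤ) - k - j) (2 * (n : ℤ) - 2 * j + 1)
        = ∑ m ∈ Finset.Icc (k + 1) n, Cz (2 * (m : ℤ) - k) (2 * (n : ℤ) - i + 1) := by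
      rw [sum_Icc_bot hkn, cz_of_gt
            (show 2 * (n : ℤ) - (k : ℕ) - (k : ℕ) < 2 * (n : ℤ) - 2 * (k : ℕ) + 1 from by
              push_cast; omega), mul_zero, zero_add]
      have hA1 := (ih (t - 1) (by omega)).1 n (k + 1) i (by omega) (by omega)
      push_cast at hA1
      calc ∑ j ∈ Finset.Icc (k + 1) n,
            Cz ((j : ℤ) + 1) (i - j) * Cz (2 * (n : ℤ) - k - j) (2 * (n : ℤ) - 2 * j + 1)
          = ∑ j ∈ Finset.Icc (k + 1) n,
            Cz ((j : ℤ) + 1) (i - j)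
              * Cz (2 * (n : ℤ) - ((k : ℤ) + 1) - j + 1) (2 * (n : ℤ) - 2 * j + 1) :=
            Finset.sum_congr rfl (fun j hj => by
              rw [show 2 * (n : ℤ) - k - j = 2 * (n : ℤ) - ((k : ℤ) + 1) - j + 1 from by ring])
        _ = ∑ m ∈ Finset.Icc (k + 1) n,
              Cz (2 * (m : ℤ) - ((k : ℤ) + 1) + 1) (2 * (n : ℤ) - i + 1) := hA1
        _ = ∑ m ∈ Finset.Icc (k + 1) n, Cz (2 * (m : ℤ) - k) (2 * (n : ℤ) - i + 1) :=
            Finset.sum_congr rfl (fun m hm => by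
              rw [show 2 * (m : ℤ) - ((k : ℤ) + 1) + 1 = 2 * (m : ℤ) - k from by ring])
    have e2 := (ih (t - 1) (by omega)).2 n k i hkn (by omega)
    rw [e1, e2]
    have rhs : ∀ m ∈ Finset.Icc k n,
        Cz (2 * (m : ℤ) - k + 1) (2 * (n : ℤ) - i + 1)
          = Cz (2 * (m : ℤ) - k) (2 * (n : ℤ) - i + 1) + Cz (2 * (m : ℤ) - k) (2 * (n : ℤ) - i) := by
      intro m hm
      simp only [Finset.mem_Icc] at hm
      rw [cz_pascal (2 * (m : ℤ) - k) (2 * (n : ℤ) - i + 1) (by push_cast; omega)]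
      rw [show 2 * (n : ℤ) - i + 1 - 1 = 2 * (n : ℤ) - i from by ring]
    rw [Finset.sum_congr rfl rhs, Finset.sum_add_distrib,
        sum_Icc_bot hkn (fun m => Cz (2 * (m : ℤ) - k) (2 * (n : ℤ) - i + 1)),
        show 2 * ((k : ℕ) : ℤ) - (k : ℕ) = ((k : ℕ) : ℤ) from by ring]
    ring
  · -- E family
    intro n k i hk ht
    rcases eq_or_lt_of_le hk with hkn | hkn
    · -- k = n : singleton
      subst hkn
      rw [Finset.Icc_self, Finset.sum_singleton, Finset.sum_singleton]
      rw [show 2 * ((k : ℕ) : ℤ) - (k : ℕ) - (k : ℕ) = (0 : ℤ) from by ring,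
          show 2 * ((k : ℕ) : ℤ) - 2 * (k : ℕ) = (0 : ℤ) from by ring,
          show 2 * ((k : ℕ) : ℤ) - (k : ℕ) = ((k : ℕ) : ℤ) from by ring]
      rw [cz_eq le_rfl le_rfl]
      simp only [Int.toNat_zero, Nat.choose_self, Nat.cast_one, mul_one]
      have hp : Cz ((k : ℤ) + 1) (2 * (k : ℤ) - i + 1)
          = Cz (k : ℤ) (2 * (k : ℤ) - i + 1) + Cz (k : ℤ) (2 * (k : ℤ) - i) := by
        rw [cz_pascal (k : ℤ) (2 * (k : ℤ) - i + 1) (by positivity),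
            show 2 * (k : ℤ) - i + 1 - 1 = 2 * (k : ℤ) - i from by ring]
      have hs : Cz ((k : ℤ) + 1) (i - k) = Cz ((k : ℤ) + 1) (2 * (k : ℤ) - i + 1) := by
        rw [cz_symm ((k : ℤ) + 1) (i - k) (by positivity),
            show (k : ℤ) + 1 - (i - k) = 2 * (k : ℤ) - i + 1 from by ring]
      rw [hs, hp]; ring
    · -- k < n
      obtain ⟨n', rfl⟩ : ∃ n', n = n' + 1 := ⟨n - 1, by omega⟩
      push_cast
      have hkn' : k ≤ n' := by omega
      have step1 : ∀ j ∈ Finset.Icc k (n' + 1),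
          Cz ((j : ℤ) + 1) (i - j) * Cz (2 * ((n' : ℤ) + 1) - k - j) (2 * ((n' : ℤ) + 1) - 2 * j)
            = Cz ((j : ℤ) + 1) (i - j)
                * Cz (2 * ((n' : ℤ) + 1) - k - j - 1) (2 * ((n' : ℤ) + 1) - 2 * j)
              + Cz ((j : ℤ) + 1) (i - j)
                * Cz (2 * ((n' : ℤ) + 1) - k - j - 1) (2 * ((n' : ℤ) + 1) - 2 * j - 1) := by
        intro j hj
        simp only [Finset.mem_Icc] at hj
        rw [show 2 * ((n' : ℤ) + 1) - k - j = (2 * ((n' : ℤ) + 1) - k - j - 1) + 1 from by ring,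
            cz_pascal (2 * ((n' : ℤ) + 1) - k - j - 1) (2 * ((n' : ℤ) + 1) - 2 * j)
              (by push_cast; omega)]
        ring
      rw [Finset.sum_congr rfl step1, Finset.sum_add_distrib]
      have e1 : ∑ j ∈ Finset.Icc k (n' + 1),
          Cz ((j : ℤ) + 1) (i - j) * Cz (2 * ((n' : ℤ) + 1) - k - j - 1) (2 * ((n' : ℤ) + 1) - 2 * j)
          = (∑ m ∈ Finset.Icc (k + 1) (n' + 1), Cz (2 * (m : ℤ) - k - 1) (2 * ((n' : ℤ) + 1) - i))
              + Cz ((k : ℤ) + 1) (2 * ((n' : ℤ) + 1) - i + 1) := by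
        rw [sum_Icc_bot (show k ≤ n' + 1 from by omega), cz_of_gt
              (show 2 * ((n' : ℤ) + 1) - (k : ℕ) - (k : ℕ) - 1 < 2 * ((n' : ℤ) + 1) - 2 * (k : ℕ)
                from by push_cast; omega), mul_zero, zero_add]
        have hE1 := (ih (t - 1) (by omega)).2 (n' + 1) (k + 1) i (by omega) (by omega)
        push_cast at hE1
        calc ∑ j ∈ Finset.Icc (k + 1) (n' + 1),
              Cz ((j : ℤ) + 1) (i - j)
                * Cz (2 * ((n' : ℤ) + 1) - k - j - 1) (2 * ((n' : ℤ) + 1) - 2 * j)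
            = ∑ j ∈ Finset.Icc (k + 1) (n' + 1),
              Cz ((j : ℤ) + 1) (i - j)
                * Cz (2 * ((n' : ℤ) + 1) - ((k : ℤ) + 1) - j) (2 * ((n' : ℤ) + 1) - 2 * j) :=
              Finset.sum_congr rfl (fun j hj => by
                rw [show 2 * ((n' : ℤ) + 1) - k - j - 1
                    = 2 * ((n' : ℤ) + 1) - ((k : ℤ) + 1) - j from by ring])
          _ = (∑ m ∈ Finset.Icc (k + 1) (n' + 1),
                Cz (2 * (m : ℤ) - ((k : ℤ) + 1)) (2 * ((n' : ℤ) + 1) - i))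
                + Cz ((k : ℤ) + 1) (2 * ((n' : ℤ) + 1) - i + 1) := hE1
          _ = (∑ m ∈ Finset.Icc (k + 1) (n' + 1),
                Cz (2 * (m : ℤ) - k - 1) (2 * ((n' : ℤ) + 1) - i))
                + Cz ((k : ℤ) + 1) (2 * ((n' : ℤ) + 1) - i + 1) := by
              congr 1
              exact Finset.sum_congr rfl (fun m hm => by
                rw [show 2 * (m : ℤ) - ((k : ℤ) + 1) = 2 * (m : ℤ) - k - 1 from by ring])
      have e2 : ∑ j ∈ Finset.Icc k (n' + 1),
          Cz ((j : ℤ) + 1) (i - j)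
            * Cz (2 * ((n' : ℤ) + 1) - k - j - 1) (2 * ((n' : ℤ) + 1) - 2 * j - 1)
          = ∑ m ∈ Finset.Icc (k + 1) (n' + 1),
              Cz (2 * (m : ℤ) - k - 1) (2 * ((n' : ℤ) + 1) - i - 1) := by
        rw [sum_Icc_top (show k ≤ n' + 1 from by omega), cz_of_neg
              (show 2 * ((n' : ℤ) + 1) - 2 * ((n' + 1 : ℕ) : ℤ) - 1 < 0 from by push_cast; omega),
            mul_zero, add_zero]
        have hA := (ih (t - 1) (by omega)).1 n' k i (by omega) (by omega)
        calc ∑ j ∈ Finset.Icc k n',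
              Cz ((j : ℤ) + 1) (i - j)
                * Cz (2 * ((n' : ℤ) + 1) - k - j - 1) (2 * ((n' : ℤ) + 1) - 2 * j - 1)
            = ∑ j ∈ Finset.Icc k n',
              Cz ((j : ℤ) + 1) (i - j) * Cz (2 * (n' : ℤ) - k - j + 1) (2 * (n' : ℤ) - 2 * j + 1) :=
              Finset.sum_congr rfl (fun j hj => by
                rw [show 2 * ((n' : ℤ) + 1) - k - j - 1 = 2 * (n' : ℤ) - (k : ℕ) - j + 1 from by ring,
                    show 2 * ((n' : ℤ) + 1) - 2 * j - 1 = 2 * (n' : ℤ) - 2 * j + 1 from by ring])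
          _ = ∑ m ∈ Finset.Icc k n', Cz (2 * (m : ℤ) - k + 1) (2 * (n' : ℤ) - i + 1) := hA
          _ = ∑ m ∈ Finset.Icc (k + 1) (n' + 1),
                Cz (2 * (m : ℤ) - k - 1) (2 * ((n' : ℤ) + 1) - i - 1) := by
              rw [sum_Icc_shift k n'
                    (fun m => Cz (2 * (m : ℤ) - k - 1) (2 * ((n' : ℤ) + 1) - i - 1))]
              exact Finset.sum_congr rfl (fun m hm => by
                push_cast
                rw [show 2 * ((m : ℤ) + 1) - k - 1 = 2 * (m : ℤ) - (k : ℕ) + 1 from by ring,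
                    show 2 * ((n' : ℤ) + 1) - i - 1 = 2 * (n' : ℤ) - i + 1 from by ring])
      rw [e1, e2]
      rw [sum_Icc_bot (show k ≤ n' + 1 from by omega)
            (fun m => Cz (2 * (m : ℤ) - k) (2 * ((n' : ℤ) + 1) - i)),
          show 2 * ((k : ℕ) : ℤ) - (k : ℕ) = ((k : ℕ) : ℤ) from by ring]
      have comb : ∀ m ∈ Finset.Icc (k + 1) (n' + 1),
          Cz (2 * (m : ℤ) - k - 1) (2 * ((n' : ℤ) + 1) - i)
            + Cz (2 * (m : ℤ) - k - 1) (2 * ((n' : ℤ) + 1) - i - 1)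
          = Cz (2 * (m : ℤ) - k) (2 * ((n' : ℤ) + 1) - i) := by
        intro m hm
        simp only [Finset.mem_Icc] at hm
        have hp := cz_pascal (2 * (m : ℤ) - k - 1) (2 * ((n' : ℤ) + 1) - i) (by push_cast; omega)
        rw [show 2 * (m : ℤ) - (k : ℕ) - 1 + 1 = 2 * (m : ℤ) - (k : ℕ) from by ring] at hp
        rw [hp]
      have hpk : Cz ((k : ℤ) + 1) (2 * ((n' : ℤ) + 1) - i + 1)
          = Cz (k : ℤ) (2 * ((n' : ℤ) + 1) - i + 1) + Cz (k : ℤ) (2 * ((n' : ℤ) + 1) - i) := by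
        rw [cz_pascal (k : ℤ) (2 * ((n' : ℤ) + 1) - i + 1) (by positivity),
            show 2 * ((n' : ℤ) + 1) - i + 1 - 1 = 2 * ((n' : ℤ) + 1) - i from by ring]
      calc (∑ m ∈ Finset.Icc (k + 1) (n' + 1), Cz (2 * (m : ℤ) - k - 1) (2 * ((n' : ℤ) + 1) - i))
            + Cz ((k : ℤ) + 1) (2 * ((n' : ℤ) + 1) - i + 1)
            + ∑ m ∈ Finset.Icc (k + 1) (n' + 1), Cz (2 * (m : ℤ) - k - 1) (2 * ((n' : ℤ) + 1) - i - 1)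
          = (∑ m ∈ Finset.Icc (k + 1) (n' + 1),
              (Cz (2 * (m : ℤ) - k - 1) (2 * ((n' : ℤ) + 1) - i)
                + Cz (2 * (m : ℤ) - k - 1) (2 * ((n' : ℤ) + 1) - i - 1)))
              + Cz ((k : ℤ) + 1) (2 * ((n' : ℤ) + 1) - i + 1) := by
            rw [Finset.sum_add_distrib]; ring
        _ = (∑ m ∈ Finset.Icc (k + 1) (n' + 1), Cz (2 * (m : ℤ) - k) (2 * ((n' : ℤ) + 1) - i))
              + (Cz (k : ℤ) (2 * ((n' : ℤ) + 1) - i + 1) + Cz (k : ℤ) (2 * ((n' : ℤ) + 1) - i)) := by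
            rw [Finset.sum_congr rfl comb, hpk]
        _ = Cz (k : ℤ) (2 * ((n' : ℤ) + 1) - i)
              + (∑ m ∈ Finset.Icc (k + 1) (n' + 1), Cz (2 * (m : ℤ) - k) (2 * ((n' : ℤ) + 1) - i))
              + Cz (k : ℤ) (2 * ((n' : ℤ) + 1) - i + 1) := by ring

/-- Closed form for the A-family. -/
lemma lemA (n k : ℕ) (i : ℤ) (hk : k ≤ n + 1) :
    ∑ j ∈ Finset.Icc k n,
        Cz ((j : ℤ) + 1) (i - j) * Cz (2 * (n : ℤ) - k - j + 1) (2 * (n : ℤ) - 2 * j + 1)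
      = ∑ m ∈ Finset.Icc k n, Cz (2 * (m : ℤ) - k + 1) (2 * (n : ℤ) - i + 1) :=
  (lemAE (2 * n + 1 - k)).1 n k i hk rfl

/-- Closed form for the B-family, by downward induction on `i`. -/
lemma lemB (n k : ℕ) (hk : k ≤ n + 1) : ∀ t : ℕ, ∀ i : ℤ, 2 * (n : ℤ) + 2 - t ≤ i →
    ∑ j ∈ Finset.Icc k n,
        Cz (j : ℤ) (i - j - 1) * Cz (2 * (n : ℤ) - k - j + 1) (2 * (n : ℤ) - 2 * j + 1)
      = ∑ m ∈ Finset.Icc k n, Cz (2 * (m : ℤ) - k) (2 * (n : ℤ) - i + 1) := by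
  intro t
  induction t with
  | zero =>
      intro i hi
      push_cast at hi
      trans (0 : ℤ)
      · exact Finset.sum_eq_zero (fun j hj => by
          simp only [Finset.mem_Icc] at hj
          rw [cz_of_gt (show (j : ℤ) < i - j - 1 from by push_cast; omega), zero_mul])
      · exact (Finset.sum_eq_zero (fun m hm => cz_of_neg (by omega))).symm
  | succ t iht =>
      intro i hi
      have step1 : ∀ j ∈ Finset.Icc k n,
          Cz (j : ℤ) (i - j - 1) * Cz (2 * (n : ℤ) - k - j + 1) (2 * (n : ℤ) - 2 * j + 1)
            = Cz ((j : ℤ) + 1) (i - j) * Cz (2 * (n : ℤ) - k - j + 1) (2 * (n : ℤ) - 2 * j + 1)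
              - Cz (j : ℤ) ((i + 1) - j - 1) * Cz (2 * (n : ℤ) - k - j + 1) (2 * (n : ℤ) - 2 * j + 1) := by
        intro j hj
        have hp : Cz ((j : ℤ) + 1) (i - j) = Cz (j : ℤ) (i - j) + Cz (j : ℤ) (i - j - 1) := by
          rw [cz_pascal (j : ℤ) (i - j) (by positivity)]
        rw [show (i + 1) - (j : ℤ) - 1 = i - j from by ring, hp]
        ring
      rw [Finset.sum_congr rfl step1, Finset.sum_sub_distrib, lemA n k i hk,
          iht (i + 1) (by push_cast at hi ⊢; omega), ← Finset.sum_sub_distrib]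
      apply Finset.sum_congr rfl
      intro m hm
      simp only [Finset.mem_Icc] at hm
      rw [show 2 * (m : ℤ) - k + 1 = (2 * (m : ℤ) - k) + 1 from by ring,
          cz_pascal (2 * (m : ℤ) - k) (2 * (n : ℤ) - i + 1) (by push_cast; omega),
          show 2 * (n : ℤ) - i + 1 - 1 = 2 * (n : ℤ) - (i + 1) + 1 from by ring]
      ring

theorem identity_two (n k i : ℕ) (hk : k ≤ n) (hi : i ≤ 2 * n + 2) :
    ((Cz (2 * (n : ℤ) - k + 2) (2 * (n : ℤ) - i + 2) : ℚ)
        - (Cz (k : ℤ) (2 * (n : ℤ) - i + 2) : ℚ))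
      = ∑ j ∈ Finset.Icc k n,
          (((i : ℚ) + 1) / ((j : ℚ) + 1))
            * (Cz ((j : ℤ) + 1) ((i : ℤ) - j) : ℚ)
            * (Cz (2 * (n : ℤ) - ((k : ℤ) + j) + 1) (2 * (n : ℤ) - 2 * j + 1) : ℚ) := by
  have step1 : ∀ j ∈ Finset.Icc k n,
      (((i : ℚ) + 1) / ((j : ℚ) + 1))
          * (Cz ((j : ℤ) + 1) ((i : ℤ) - j) : ℚ)
          * (Cz (2 * (n : ℤ) - ((k : ℤ) + j) + 1) (2 * (n : ℤ) - 2 * j + 1) : ℚ)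
        = (((Cz ((j : ℤ) + 1) ((i : ℤ) - j)
              + Cz (j : ℤ) ((i : ℤ) - j - 1))
            * Cz (2 * (n : ℤ) - k - j + 1) (2 * (n : ℤ) - 2 * j + 1) : ℤ) : ℚ) := by
    intro j hj
    have hkey := czkey j (i : ℤ)
    have hkeyQ : ((i : ℚ) + 1) * ((Cz ((j : ℤ) + 1) ((i : ℤ) - j) : ℤ) : ℚ)
        = ((j : ℚ) + 1) * (((Cz ((j : ℤ) + 1) ((i : ℤ) - j) : ℤ) : ℚ)
            + ((Cz (j : ℤ) ((i : ℤ) - j - 1) : ℤ) : ℚ)) := by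
      exact_mod_cast congrArg (fun z : ℤ => (z : ℚ)) hkey
    have hj1 : ((j : ℚ) + 1) ≠ 0 := by positivity
    rw [show 2 * (n : ℤ) - ((k : ℤ) + j) + 1 = 2 * (n : ℤ) - (k : ℕ) - j + 1 from by push_cast; ring]
    rw [div_mul_eq_mul_div, div_mul_eq_mul_div, div_eq_iff hj1]
    push_cast
    push_cast at hkeyQ
    linear_combination
      (((Cz (2 * (n : ℤ) - (k : ℤ) - (j : ℤ) + 1) (2 * (n : ℤ) - 2 * (j : ℤ) + 1) : ℤ) : ℚ)) * hkeyQ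
  rw [Finset.sum_congr rfl step1, ← Int.cast_sum]
  have main : ∑ j ∈ Finset.Icc k n,
      (Cz ((j : ℤ) + 1) ((i : ℤ) - j) + Cz (j : ℤ) ((i : ℤ) - j - 1))
        * Cz (2 * (n : ℤ) - k - j + 1) (2 * (n : ℤ) - 2 * j + 1)
      = Cz (2 * (n : ℤ) - k + 2) (2 * (n : ℤ) - i + 2) - Cz (k : ℤ) (2 * (n : ℤ) - i + 2) := by
    have expand : ∀ j ∈ Finset.Icc k n,
        (Cz ((j : ℤ) + 1) ((i : ℤ) - j) + Cz (j : ℤ) ((i : ℤ) - j - 1))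
          * Cz (2 * (n : ℤ) - k - j + 1) (2 * (n : ℤ) - 2 * j + 1)
        = Cz ((j : ℤ) + 1) ((i : ℤ) - j) * Cz (2 * (n : ℤ) - k - j + 1) (2 * (n : ℤ) - 2 * j + 1)
          + Cz (j : ℤ) ((i : ℤ) - j - 1) * Cz (2 * (n : ℤ) - k - j + 1) (2 * (n : ℤ) - 2 * j + 1) := by
      intro j hj; ring
    rw [Finset.sum_congr rfl expand, Finset.sum_add_distrib,
        lemA n k (i : ℤ) (by omega),
        lemB n k (by omega) (2 * n + 3) (i : ℤ) (by push_cast; omega),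
        ← Finset.sum_add_distrib]
    have tele : ∀ m ∈ Finset.Icc k n,
        Cz (2 * (m : ℤ) - k + 1) (2 * (n : ℤ) - i + 1)
          + Cz (2 * (m : ℤ) - k) (2 * (n : ℤ) - i + 1)
        = (fun m : ℕ => Cz (2 * (m : ℤ) - k) (2 * (n : ℤ) - i + 2)) (m + 1)
          - (fun m : ℕ => Cz (2 * (m : ℤ) - k) (2 * (n : ℤ) - i + 2)) m := by
      intro m hm
      simp only [Finset.mem_Icc] at hm
      simp only []
      have h1 : Cz (2 * ((m : ℤ) + 1) - k) (2 * (n : ℤ) - i + 2)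
          = Cz (2 * (m : ℤ) - k + 1) (2 * (n : ℤ) - i + 2)
            + Cz (2 * (m : ℤ) - k + 1) (2 * (n : ℤ) - i + 1) := by
        rw [show 2 * ((m : ℤ) + 1) - (k : ℕ) = (2 * (m : ℤ) - k + 1) + 1 from by ring,
            cz_pascal (2 * (m : ℤ) - k + 1) (2 * (n : ℤ) - i + 2) (by push_cast; omega),
            show 2 * (n : ℤ) - i + 2 - 1 = 2 * (n : ℤ) - i + 1 from by ring]
      have h2 : Cz (2 * (m : ℤ) - k + 1) (2 * (n : ℤ) - i + 2)
          = Cz (2 * (m : ℤ) - k) (2 * (n : ℤ) - i + 2)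
            + Cz (2 * (m : ℤ) - k) (2 * (n : ℤ) - i + 1) := by
        rw [show 2 * (m : ℤ) - (k : ℕ) + 1 = (2 * (m : ℤ) - k) + 1 from by ring,
            cz_pascal (2 * (m : ℤ) - k) (2 * (n : ℤ) - i + 2) (by push_cast; omega),
            show 2 * (n : ℤ) - i + 2 - 1 = 2 * (n : ℤ) - i + 1 from by ring]
      push_cast
      push_cast at h1 h2
      linarith [h1, h2]
    rw [Finset.sum_congr rfl tele,
        sum_Icc_telescope (fun m : ℕ => Cz (2 * (m : ℤ) - k) (2 * (n : ℤ) - i + 2)) n (by omega)]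
    rw [show 2 * (((n : ℕ) + 1 : ℕ) : ℤ) - (k : ℕ) = 2 * (n : ℤ) - k + 2 from by push_cast; ring,
        show 2 * ((k : ℕ) : ℤ) - (k : ℕ) = ((k : ℕ) : ℤ) from by ring]
  rw [main]
  push_cast
  ring
end

section
/- Let d be a natural number, n = floor(d/2), ε = (-1)^d. Define M(i,k) = C(d-k+1, d-i+1) - C(k, d-i+1) for 0 ≤ i ≤ d, 0 ≤ k ≤ n. Define A_+(i,j) = C(j,i-j), A_-(i,j) = C(j+1,i-j) + C(j,i-j-1), G_+(j,k) = ((2k+1)/(2j+1)) * C(k+j, 2j), G_-(j,k) = C(k+j+1, 2j+1). Then M(i,k) = sum over j from 0 to n of A_ε(i,j) * G_ε(n-j, n-k), where A_ε means A_+ if d is even and A_- if d is odd, and similarly for G_ε. -/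
/-- `A₊(i,j) = C(j, i-j)`. -/
def Ap (i j : ℤ) : ℚ := (Cz j (i - j) : ℚ)

/-- `A₋(i,j) = C(j+1, i-j) + C(j, i-j-1)`. -/
def Am (i j : ℤ) : ℚ := (Cz (j + 1) (i - j) : ℚ) + (Cz j (i - j - 1) : ℚ)

/-- `G₊(j,k) = ((2k+1)/(2j+1)) C(k+j, 2j)`. -/
def Gp (j k : ℤ) : ℚ := ((2 * k + 1) / (2 * j + 1) : ℚ) * (Cz (k + j) (2 * j) : ℚ)

/-- `G₋(j,k) = C(k+j+1, 2j+1)`. -/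
def Gm (j k : ℤ) : ℚ := (Cz (k + j + 1) (2 * j + 1) : ℚ)

lemma Cz_natCast (n k : ℕ) : Cz n k = n.choose k := by
  unfold Cz
  split
  · simp
  · next h =>
    push_neg at h
    have : n < k := by exact_mod_cast h (Int.ofNat_nonneg k)
    rw [Nat.choose_eq_zero_of_lt this]; rfl

lemma Cz_zero_of_neg {n k : ℤ} (h : k < 0) : Cz n k = 0 := by
  unfold Cz; rw [if_neg]; rintro ⟨h1,-⟩; omega

lemma Cz_zero_of_gt {n k : ℤ} (h : n < k) : Cz n k = 0 := by
  unfold Cz; rw [if_neg]; rintro ⟨-,h2⟩; omega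

lemma Cz_pascal (N : ℤ) (hN : 0 ≤ N) (r : ℤ) : Cz (N+1) r = Cz N r + Cz N (r-1) := by
  lift N to ℕ using hN
  rcases lt_trichotomy r 0 with hr | hr | hr
  · rw [Cz_zero_of_neg hr, Cz_zero_of_neg hr, Cz_zero_of_neg (by omega)]; ring
  · subst hr
    rw [show Cz (N:ℤ) (0-1) = 0 from Cz_zero_of_neg (by norm_num)]
    rw [show ((N:ℤ)+1) = ((N+1 : ℕ) : ℤ) by push_cast; ring,
        show (0:ℤ) = ((0:ℕ):ℤ) from rfl, Cz_natCast, Cz_natCast]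
    simp
  · obtain ⟨s, rfl⟩ : ∃ s : ℕ, r = (s:ℤ) + 1 := ⟨(r-1).toNat, by omega⟩
    rw [show ((s:ℤ)+1-1) = ((s : ℕ) : ℤ) by push_cast; ring,
        show ((N:ℤ)+1) = ((N+1 : ℕ) : ℤ) by push_cast; ring,
        show ((s:ℤ)+1) = ((s+1 : ℕ) : ℤ) by push_cast; ring,
        Cz_natCast, Cz_natCast, Cz_natCast, Nat.choose_succ_succ]
    push_cast; ring

lemma Gp_key (j k : ℤ) :
    (2*k+1) * Cz (k+j) (2*j) = (2*j+1) * (Cz (k+j) (2*j) + 2 * Cz (k+j) (2*j+1)) := by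
  rcases lt_or_ge j 0 with hj | hj
  · rw [Cz_zero_of_neg (by omega), Cz_zero_of_neg (by omega)]; ring
  rcases lt_or_ge k j with hk | hk
  · rw [Cz_zero_of_gt (by omega), Cz_zero_of_gt (by omega)]; ring
  lift j to ℕ using hj
  have hk0 : 0 ≤ k := by omega
  lift k to ℕ using hk0
  have hkj : j ≤ k := by exact_mod_cast hk
  rw [show ((k:ℤ)+j) = ((k+j:ℕ):ℤ) by push_cast; ring,
      show (2*(j:ℤ)+1) = ((2*j+1:ℕ):ℤ) by push_cast; ring,
      show (2*(j:ℤ)) = ((2*j:ℕ):ℤ) by push_cast; ring,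
      Cz_natCast, Cz_natCast]
  have h := Nat.choose_succ_right_eq (k+j) (2*j)
  have hsub : k + j - 2*j = k - j := by omega
  rw [hsub] at h
  have h2 : 2*k+1 = (2*j+1) + 2*(k-j) := by omega
  have := congrArg (fun x : ℕ => (x : ℤ)) h
  push_cast [hkj] at this ⊢
  nlinarith [this]

lemma Gp_eq (j k : ℤ) : Gp j k = (Cz (k+j) (2*j) : ℚ) + 2 * (Cz (k+j) (2*j+1) : ℚ) := by
  have hne : ((2*j+1 : ℤ) : ℚ) ≠ 0 := by
    intro h
    have : (2*j+1 : ℤ) = 0 := by exact_mod_cast h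
    omega
  unfold Gp
  rw [div_mul_eq_mul_div, div_eq_iff (by push_cast at hne ⊢; omega)]
  have := congrArg (fun x : ℤ => (x : ℚ)) (Gp_key j k)
  push_cast at this ⊢
  linarith [this]

lemma Gp_zero_neg {j : ℤ} (k : ℤ) (hj : j < 0) : Gp j k = 0 := by
  unfold Gp; rw [Cz_zero_of_neg (by omega)]; push_cast; ring

lemma Gp_zero_gt {j k : ℤ} (h : k < j) : Gp j k = 0 := by
  rcases lt_or_ge j 0 with hj | hj
  · exact Gp_zero_neg k hj
  · unfold Gp; rw [Cz_zero_of_gt (by omega)]; push_cast; ring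

lemma Gm_zero_neg {j : ℤ} (k : ℤ) (hj : j < 0) : Gm j k = 0 := by
  unfold Gm; rw [Cz_zero_of_neg (by omega)]; push_cast; ring

lemma Gm_zero_gt {j k : ℤ} (h : k < j) : Gm j k = 0 := by
  unfold Gm; rw [Cz_zero_of_gt (by omega)]; push_cast; ring

lemma Gp_rec (m j : ℤ) (hm : 0 ≤ m) :
    Gp j (m+2) = Gp (j-1) (m+1) + 2 * Gp j (m+1) - Gp j m := by
  rcases lt_or_ge j 0 with hj | hj
  · rw [Gp_zero_neg _ hj, Gp_zero_neg _ hj, Gp_zero_neg _ hj, Gp_zero_neg _ (by omega)]; ring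
  · have A := congrArg (fun x : ℤ => (x:ℚ)) (Cz_pascal (m+j+1) (by omega) (2*j))
    have B := congrArg (fun x : ℤ => (x:ℚ)) (Cz_pascal (m+j+1) (by omega) (2*j+1))
    have C := congrArg (fun x : ℤ => (x:ℚ)) (Cz_pascal (m+j) (by omega) (2*j))
    have D := congrArg (fun x : ℤ => (x:ℚ)) (Cz_pascal (m+j) (by omega) (2*j+1))
    have E := congrArg (fun x : ℤ => (x:ℚ)) (Cz_pascal (m+j) (by omega) (2*j-1))
    simp only [Int.cast_add] at A B C D E
    rw [Gp_eq, Gp_eq, Gp_eq, Gp_eq]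
    ring_nf at A B C D E ⊢
    linarith [A, B, C, D, E]

lemma Gm_rec (m j : ℤ) (hm : 0 ≤ m) :
    Gm j (m+2) = Gm (j-1) (m+1) + 2 * Gm j (m+1) - Gm j m := by
  rcases lt_or_ge j 0 with hj | hj
  · rw [Gm_zero_neg _ hj, Gm_zero_neg _ hj, Gm_zero_neg _ hj, Gm_zero_neg _ (by omega)]; ring
  · have A := congrArg (fun x : ℤ => (x:ℚ)) (Cz_pascal (m+j+2) (by omega) (2*j+1))
    have B := congrArg (fun x : ℤ => (x:ℚ)) (Cz_pascal (m+j+1) (by omega) (2*j+1))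
    have C := congrArg (fun x : ℤ => (x:ℚ)) (Cz_pascal (m+j+1) (by omega) (2*j))
    simp only [Int.cast_add] at A B C
    unfold Gm
    ring_nf at A B C ⊢
    linarith [A, B, C]

open Finset in
lemma sum_step {R : Type*} [CommRing R] (G : ℤ → ℤ → R) (y : R)
    (hneg : ∀ j k : ℤ, j < 0 → G j k = 0) (hgt : ∀ j k : ℤ, k < j → G j k = 0)
    (hrec : ∀ m j : ℤ, 0 ≤ m → G j (m+2) = G (j-1) (m+1) + 2*G j (m+1) - G j m)
    (m : ℕ) :
    ∑ p ∈ range (m+3), G ((m:ℤ)+2-p) ((m:ℤ)+2) * y^p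
      = (1+2*y) * (∑ p ∈ range (m+2), G ((m:ℤ)+1-p) ((m:ℤ)+1) * y^p)
        - y^2 * ∑ p ∈ range (m+1), G ((m:ℤ)-p) (m:ℤ) * y^p := by
  have step : ∀ p ∈ range (m+3),
      G ((m:ℤ)+2-p) ((m:ℤ)+2) * y^p
        = G ((m:ℤ)+1-p) ((m:ℤ)+1) * y^p + 2*(G ((m:ℤ)+2-p) ((m:ℤ)+1) * y^p)
          - G ((m:ℤ)+2-p) (m:ℤ) * y^p := by
    intro p _
    rw [show ((m:ℤ)+1-p) = ((m:ℤ)+2-p) - 1 by ring,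
        hrec (m:ℤ) ((m:ℤ)+2-p) (Int.ofNat_nonneg m)]
    ring
  rw [Finset.sum_congr rfl step, Finset.sum_sub_distrib, Finset.sum_add_distrib]
  have S1 : ∑ p ∈ range (m+3), G ((m:ℤ)+1-p) ((m:ℤ)+1) * y^p
      = ∑ p ∈ range (m+2), G ((m:ℤ)+1-p) ((m:ℤ)+1) * y^p := by
    rw [Finset.sum_range_succ,
        show ((m:ℤ)+1-((m+2:ℕ):ℤ)) = -1 by push_cast; ring,
        hneg (-1) _ (by norm_num)]
    ring
  have S2 : ∑ p ∈ range (m+3), 2*(G ((m:ℤ)+2-p) ((m:ℤ)+1) * y^p)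
      = 2*y * ∑ p ∈ range (m+2), G ((m:ℤ)+1-p) ((m:ℤ)+1) * y^p := by
    rw [Finset.sum_range_succ', show (((0:ℕ)):ℤ) = 0 from rfl]
    rw [show ((m:ℤ)+2-(0:ℤ)) = (m:ℤ)+2 by ring, hgt ((m:ℤ)+2) ((m:ℤ)+1) (by omega)]
    rw [Finset.mul_sum]
    simp only [mul_zero, zero_mul, add_zero]
    apply Finset.sum_congr rfl
    intro q _
    rw [show ((m:ℤ)+2-((q+1:ℕ):ℤ)) = (m:ℤ)+1-q by push_cast; ring, pow_succ]
    ring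
  have S3 : ∑ p ∈ range (m+3), G ((m:ℤ)+2-p) (m:ℤ) * y^p
      = y^2 * ∑ p ∈ range (m+1), G ((m:ℤ)-p) (m:ℤ) * y^p := by
    rw [show m+3 = (m+1)+1+1 from rfl, Finset.sum_range_succ', Finset.sum_range_succ']
    rw [show ((m:ℤ)+2-((0:ℕ):ℤ)) = (m:ℤ)+2 by push_cast; ring,
        hgt ((m:ℤ)+2) (m:ℤ) (by omega),
        show ((m:ℤ)+2-(((0:ℕ)+1:ℕ)):ℤ) = (m:ℤ)+1 by push_cast; ring,
        hgt ((m:ℤ)+1) (m:ℤ) (by omega)]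
    rw [Finset.mul_sum]
    simp only [mul_zero, zero_mul, add_zero]
    apply Finset.sum_congr rfl
    intro q _
    rw [show ((m:ℤ)+2-((q+1+1:ℕ):ℤ)) = (m:ℤ)-q by push_cast; ring]
    ring
  rw [S1, S2, S3]
  ring

open Polynomial in
lemma even_poly : ∀ m : ℕ,
    ∑ p ∈ Finset.range (m+1), C (Gp ((m:ℤ)-p) (m:ℤ)) * (X*(1+X))^p
      = ((1:Polynomial ℚ)+X)^(2*m+1) - X^(2*m+1) := by
  intro m
  induction m using Nat.strong_induction_on with
  | _ m ih =>
    match m with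
    | 0 => norm_num [Gp, Cz]
    | 1 =>
      rw [Finset.sum_range_succ, Finset.sum_range_one]
      norm_num
      rw [show Gp 1 1 = 1 by norm_num [Gp, Cz], show Gp 0 1 = 3 by norm_num [Gp, Cz],
          map_one, show (C (3:ℚ)) = 3 from map_ofNat C 3]
      ring
    | (m+2) =>
      have h0 := ih m (by omega)
      have h1 := ih (m+1) (by omega)
      have hs := sum_step (fun a b => (C (Gp a b) : Polynomial ℚ)) (X*(1+X))
        (fun j k h => by simp [Gp_zero_neg k h])
        (fun j k h => by simp [Gp_zero_gt h])
        (fun m j h => by rw [Gp_rec m j h]; push_cast [map_add, map_sub, map_mul, map_ofNat]; ring)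
        m
      push_cast at h1 ⊢
      rw [show m+2+1 = m+3 from rfl, hs, h1, h0]
      ring

open Polynomial in
lemma odd_poly : ∀ m : ℕ,
    ((1:Polynomial ℚ)+2*X) * ∑ p ∈ Finset.range (m+1), C (Gm ((m:ℤ)-p) (m:ℤ)) * (X*(1+X))^p
      = ((1:Polynomial ℚ)+X)^(2*m+2) - X^(2*m+2) := by
  intro m
  induction m using Nat.strong_induction_on with
  | _ m ih =>
    match m with
    | 0 => norm_num [Gm, Cz]; ring
    | 1 =>
      rw [Finset.sum_range_succ, Finset.sum_range_one]
      norm_num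
      rw [show Gm 1 1 = 1 by norm_num [Gm, Cz], show Gm 0 1 = 2 by norm_num [Gm, Cz],
          map_one, show (C (2:ℚ)) = 2 from map_ofNat C 2]
      ring
    | (m+2) =>
      have h0 := ih m (by omega)
      have h1 := ih (m+1) (by omega)
      have hs := sum_step (fun a b => (C (Gm a b) : Polynomial ℚ)) (X*(1+X))
        (fun j k h => by simp [Gm_zero_neg k h])
        (fun j k h => by simp [Gm_zero_gt h])
        (fun m j h => by rw [Gm_rec m j h]; push_cast [map_add, map_sub, map_mul, map_ofNat]; ring)
        m
      push_cast at h1 ⊢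
      rw [show m+2+1 = m+3 from rfl, hs]
      linear_combination (1+2*(X*(1+X):Polynomial ℚ)) * h1 - ((X*(1+X):Polynomial ℚ))^2 * h0

open Polynomial in
lemma coeff_xa (a b i : ℕ) :
    ((X:Polynomial ℚ)^a * (1+X)^b).coeff i = if a ≤ i then (b.choose (i-a) : ℚ) else 0 := by
  rw [mul_comm, coeff_mul_X_pow']
  split
  · rw [coeff_one_add_X_pow]
  · rfl

open Polynomial in
lemma Ap_coeff (i j : ℕ) : (((X:Polynomial ℚ)*(1+X))^j).coeff i = Ap i j := by
  rw [mul_pow, coeff_xa]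
  unfold Ap
  split
  · next h =>
    rw [show ((i:ℤ) - j) = ((i - j : ℕ) : ℤ) by omega, Cz_natCast]
    norm_cast
  · next h =>
    rw [Cz_zero_of_neg (by omega)]
    norm_num

open Polynomial in
lemma Am_coeff (i j : ℕ) : (((1:Polynomial ℚ)+2*X) * ((X:Polynomial ℚ)*(1+X))^j).coeff i = Am i j := by
  have hAm : Am i j = (Cz j (i - j) : ℚ) + 2 * (Cz j ((i:ℤ) - j - 1) : ℚ) := by
    unfold Am
    rw [Cz_pascal (j:ℤ) (Int.ofNat_nonneg j) ((i:ℤ)-j)]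
    push_cast
    ring
  rw [hAm, mul_pow, add_mul, one_mul, coeff_add, coeff_xa]
  rw [show (2*X*((X:Polynomial ℚ)^j * (1+X)^j)) = 2*(X^(j+1) * (1+X)^j) by ring,
      show ((2:Polynomial ℚ)*(X^(j+1) * (1+X)^j)) = Polynomial.C 2 * (X^(j+1) * (1+X)^j) by
        rw [map_ofNat],
      coeff_C_mul, coeff_xa]
  congr 1
  · split
    · next h => rw [show ((i:ℤ) - j) = ((i - j : ℕ) : ℤ) by omega, Cz_natCast]; norm_cast
    · next h => rw [Cz_zero_of_neg (by omega)]; norm_num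
  · split
    · next h => rw [show ((i:ℤ) - j - 1) = ((i - (j+1) : ℕ) : ℤ) by omega, Cz_natCast]; norm_cast
    · next h => rw [Cz_zero_of_neg (by omega)]; norm_num

open Finset in
lemma sum_shift {R : Type*} [CommRing R] (G : ℤ → ℤ → R) (y : R)
    (hgt : ∀ j k : ℤ, k < j → G j k = 0) (n k : ℕ) (hk : k ≤ n) :
    ∑ j ∈ range (n+1), G ((n:ℤ)-j) ((n:ℤ)-k) * y^j
      = y^k * ∑ p ∈ range (n-k+1), G (((n-k:ℕ):ℤ)-p) ((n-k:ℕ):ℤ) * y^p := by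
  have hsplit : range (n+1) = range k ∪ Ico k (n+1) := by
    rw [Finset.range_eq_Ico, ← Finset.Ico_union_Ico_eq_Ico (Nat.zero_le k) (by omega), Finset.range_eq_Ico]
  rw [hsplit, Finset.sum_union (by
      rw [Finset.disjoint_left]
      intro a ha hb
      rw [Finset.mem_range] at ha
      rw [Finset.mem_Ico] at hb
      omega)]
  have h1 : ∑ j ∈ range k, G ((n:ℤ)-j) ((n:ℤ)-k) * y^j = 0 := by
    apply Finset.sum_eq_zero
    intro j hj
    rw [Finset.mem_range] at hj
    rw [hgt _ _ (by omega)]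
    ring
  rw [h1, zero_add, Finset.sum_Ico_eq_sum_range]
  rw [show n+1-k = n-k+1 by omega, Finset.mul_sum]
  apply Finset.sum_congr rfl
  intro p hp
  rw [Finset.mem_range] at hp
  rw [show ((n:ℤ)-(((k+p):ℕ):ℤ)) = (((n-k:ℕ):ℤ)-p) by omega,
      show ((n:ℤ)-(k:ℤ)) = ((n-k:ℕ):ℤ) by omega, pow_add]
  ring

open Polynomial in
lemma lhs1 (d i k : ℕ) (hi : i ≤ d) (hk : k ≤ d) :
    (Cz ((d:ℤ)-k+1) ((d:ℤ)-i+1) : ℚ) = ((X:Polynomial ℚ)^k * (1+X)^(d-k+1)).coeff i := by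
  rw [coeff_xa]
  split
  · next h =>
    rw [show ((d:ℤ)-k+1) = ((d-k+1:ℕ):ℤ) by omega,
        show ((d:ℤ)-i+1) = ((d-i+1:ℕ):ℤ) by omega, Cz_natCast]
    norm_cast
    rw [show d-i+1 = (d-k+1) - (i-k) by omega]
    exact Nat.choose_symm (by omega)
  · next h => rw [Cz_zero_of_gt (by omega)]; norm_num

open Polynomial in
lemma lhs2 (d i k : ℕ) (hi : i ≤ d) (hk : k ≤ d) :
    (Cz (k:ℤ) ((d:ℤ)-i+1) : ℚ) = ((X:Polynomial ℚ)^(d+1-k) * (1+X)^k).coeff i := by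
  rw [coeff_xa]
  split
  · next h =>
    rw [show ((d:ℤ)-i+1) = ((d-i+1:ℕ):ℤ) by omega, Cz_natCast]
    norm_cast
    rw [show i - (d+1-k) = k - (d-i+1) by omega]
    exact (Nat.choose_symm (by omega)).symm
  · next h => rw [Cz_zero_of_gt (by omega)]; norm_num

open Polynomial in
theorem decomposition_Mg (d : ℕ) (n : ℕ) (hn : n = d / 2) (i k : ℕ)
    (hi : i ≤ d) (hk : k ≤ n) :
    ((Cz ((d : ℤ) - k + 1) ((d : ℤ) - i + 1) : ℚ) - (Cz (k : ℤ) ((d : ℤ) - i + 1) : ℚ))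
      = ∑ j ∈ Finset.range (n + 1),
          if Even d then Ap i j * Gp ((n : ℤ) - j) ((n : ℤ) - k)
          else Am i j * Gm ((n : ℤ) - j) ((n : ℤ) - k) := by
  have hkd : k ≤ d := by omega
  by_cases hd : Even d
  · have hdn : d = 2*n := by
      have := Nat.even_iff.mp hd
      omega
    simp only [if_pos hd]
    have key : ∀ j ∈ Finset.range (n+1), Ap i j * Gp ((n:ℤ)-j) ((n:ℤ)-k)
        = ((Polynomial.C (Gp ((n:ℤ)-j) ((n:ℤ)-k)) * ((X:Polynomial ℚ)*(1+X))^j).coeff i) := by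
      intro j _
      rw [coeff_C_mul, Ap_coeff]
      ring
    rw [Finset.sum_congr rfl key, ← Polynomial.finset_sum_coeff,
        sum_shift (fun a b => Polynomial.C (Gp a b)) ((X:Polynomial ℚ)*(1+X))
          (fun j k h => by show Polynomial.C (Gp j k) = 0; rw [Gp_zero_gt h, map_zero]) n k hk,
        even_poly (n-k)]
    have hpoly : ((X:Polynomial ℚ)*(1+X))^k * ((1+X)^(2*(n-k)+1) - X^(2*(n-k)+1))
        = X^k * (1+X)^(d-k+1) - X^(d+1-k) * (1+X)^k := by
      rw [show d-k+1 = (2*(n-k)+1)+k by omega, show d+1-k = (2*(n-k)+1)+k by omega,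
          pow_add, pow_add, mul_pow]
      ring
    rw [hpoly, Polynomial.coeff_sub, ← lhs1 d i k hi hkd, ← lhs2 d i k hi hkd]
  · have hdn : d = 2*n+1 := by
      have := Nat.not_even_iff.mp hd
      omega
    simp only [if_neg hd]
    have key : ∀ j ∈ Finset.range (n+1), Am i j * Gm ((n:ℤ)-j) ((n:ℤ)-k)
        = ((Polynomial.C (Gm ((n:ℤ)-j) ((n:ℤ)-k)) * (((1:Polynomial ℚ)+2*X) * ((X:Polynomial ℚ)*(1+X))^j)).coeff i) := by
      intro j _
      rw [coeff_C_mul, Am_coeff]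
      ring
    have pull : ∑ j ∈ Finset.range (n+1),
          Polynomial.C (Gm ((n:ℤ)-j) ((n:ℤ)-k)) * (((1:Polynomial ℚ)+2*X) * ((X:Polynomial ℚ)*(1+X))^j)
        = ((1:Polynomial ℚ)+2*X) * ∑ j ∈ Finset.range (n+1),
            Polynomial.C (Gm ((n:ℤ)-j) ((n:ℤ)-k)) * ((X:Polynomial ℚ)*(1+X))^j := by
      rw [Finset.mul_sum]
      exact Finset.sum_congr rfl (fun j _ => by ring)
    rw [Finset.sum_congr rfl key, ← Polynomial.finset_sum_coeff, pull,
        sum_shift (fun a b => Polynomial.C (Gm a b)) ((X:Polynomial ℚ)*(1+X))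
          (fun j k h => by show Polynomial.C (Gm j k) = 0; rw [Gm_zero_gt h, map_zero]) n k hk,
        show ((1:Polynomial ℚ)+2*X) * (((X:Polynomial ℚ)*(1+X))^k * ∑ p ∈ Finset.range (n-k+1),
            Polynomial.C (Gm (((n-k:ℕ):ℤ)-p) ((n-k:ℕ):ℤ)) * ((X:Polynomial ℚ)*(1+X))^p)
          = ((X:Polynomial ℚ)*(1+X))^k * (((1:Polynomial ℚ)+2*X) * ∑ p ∈ Finset.range (n-k+1),
            Polynomial.C (Gm (((n-k:ℕ):ℤ)-p) ((n-k:ℕ):ℤ)) * ((X:Polynomial ℚ)*(1+X))^p) by ring,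
        odd_poly (n-k)]
    have hpoly : ((X:Polynomial ℚ)*(1+X))^k * ((1+X)^(2*(n-k)+2) - X^(2*(n-k)+2))
        = X^k * (1+X)^(d-k+1) - X^(d+1-k) * (1+X)^k := by
      rw [show d-k+1 = (2*(n-k)+2)+k by omega, show d+1-k = (2*(n-k)+2)+k by omega,
          pow_add, pow_add, mul_pow]
      ring
    rw [hpoly, Polynomial.coeff_sub, ← lhs1 d i k hi hkd, ← lhs2 d i k hi hkd]
end
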